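/- Suppose U : ℝ≥0 → ℝ≥0 is piecewise absolutely continuous with jump times 0 < t₁ < t₂ < ... satisfying t_{j+1} − t_j ≥ ε > 0, U'(t) ≤ −ϖ·U(t) + c on each interval (t_j, t_{j+1}) for ϖ > 0, c ≥ 0, and U(t_j⁺) ≤ U(t_j⁻) + d at each jump with d ≥ 0. Then for all t ≥ 0, U(t) ≤ e^{−ϖ t}·U(0) + (c + ϖ·d)/(ϖ·(1 − e^{−ε·ϖ})). -/

import Mathlib

open Set Filter Finset

/-- Grönwall on a half-open interval. -/
lemma gron_aux (ϖ c : ℝ) (hϖ : 0 < ϖ) (a b : ℝ) (U f : ℝ → ℝ)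
    (hcont : ContinuousOn U (Set.Ico a b))
    (hderiv : ∀ s ∈ Set.Ioo a b, HasDerivAt U (f s) s)
    (hfle : ∀ s ∈ Set.Ioo a b, f s ≤ -ϖ * U s + c) :
    ∀ s ∈ Set.Ico a b, U s ≤ Real.exp (-ϖ * (s - a)) * U a
      + (1 - Real.exp (-ϖ * (s - a))) * (c / ϖ) := by
  intro s hs
  rcases eq_or_lt_of_le hs.1 with heq | hlt
  · subst heq; simp
  set g : ℝ → ℝ := fun y => Real.exp (ϖ * (y - a)) * (U y - c / ϖ) with hg
  have hgderiv : ∀ x ∈ Set.Ioo a b,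
      HasDerivAt g (Real.exp (ϖ * (x - a)) * (f x + ϖ * U x - c)) x := by
    intro x hx
    have h0 : HasDerivAt (fun y => ϖ * (y - a)) ϖ x := by
      simpa using ((hasDerivAt_id x).sub_const a).const_mul ϖ
    have h1 : HasDerivAt (fun y => Real.exp (ϖ * (y - a)))
        (Real.exp (ϖ * (x - a)) * ϖ) x := (Real.hasDerivAt_exp _).comp x h0
    have h2 := (hderiv x hx).sub_const (c / ϖ)
    have := h1.mul h2
    convert this using 1
    · rfl
    · rfl
    · rfl
    have hc' : ϖ * (c / ϖ) = c := by field_simp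
    linear_combination Real.exp (ϖ * (x - a)) * hc'
  have hsubI : Set.Icc a s ⊆ Set.Ico a b := fun x hx => ⟨hx.1, lt_of_le_of_lt hx.2 hs.2⟩
  have hsubO : Set.Ioo a s ⊆ Set.Ioo a b := fun x hx => ⟨hx.1, lt_trans hx.2 hs.2⟩
  have hgcont : ContinuousOn g (Set.Icc a s) := by
    apply ContinuousOn.mul
    · exact Continuous.continuousOn (by fun_prop)
    · exact (hcont.mono hsubI).sub continuousOn_const
  have hanti : AntitoneOn g (Set.Icc a s) := by
    apply antitoneOn_of_deriv_nonpos (convex_Icc a s) hgcont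
    · intro x hx
      rw [interior_Icc] at hx
      exact ((hgderiv x (hsubO hx)).differentiableAt).differentiableWithinAt
    · intro x hx
      rw [interior_Icc] at hx
      rw [(hgderiv x (hsubO hx)).deriv]
      have := hfle x (hsubO hx)
      have hexp : (0:ℝ) < Real.exp (ϖ * (x - a)) := Real.exp_pos _
      nlinarith
  have hga : g a = U a - c / ϖ := by simp [hg]
  have h := hanti (Set.left_mem_Icc.2 hs.1) (Set.right_mem_Icc.2 hs.1) hs.1
  rw [hga] at h
  have hE : (0:ℝ) < Real.exp (ϖ * (s - a)) := Real.exp_pos _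
  have hinv : Real.exp (-ϖ * (s - a)) = (Real.exp (ϖ * (s - a)))⁻¹ := by
    rw [← Real.exp_neg]; ring_nf
  have hUs : U s - c / ϖ ≤ Real.exp (-ϖ * (s - a)) * (U a - c / ϖ) := by
    rw [hinv]
    have := mul_le_mul_of_nonneg_left h (le_of_lt (inv_pos.2 hE))
    calc U s - c / ϖ = (Real.exp (ϖ * (s - a)))⁻¹ * g s := by
          simp only [hg]; rw [← mul_assoc, inv_mul_cancel₀ hE.ne', one_mul]
      _ ≤ (Real.exp (ϖ * (s - a)))⁻¹ * (U a - c / ϖ) := this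
  nlinarith [hUs]

/-- Combined flow/jump estimate (B17): if the nonnegative function `U` satisfies
`U' ≤ −ϖU + c` between the jump times `t j` (with dwell time `≥ ε`), and jumps
at most by `d` (relative to its left limit) at each jump time, then
`U(s) ≤ e^{−ϖ s} U(0) + (c + ϖd)/(ϖ(1 − e^{−εϖ}))` for all `s ≥ 0`. -/
theorem hybrid_flow_jump_estimate (ε ϖ c d : ℝ) (hε : 0 < ε) (hϖ : 0 < ϖ)
    (hc : 0 ≤ c) (hd : 0 ≤ d)
    (t : ℕ → ℝ) (ht0 : t 0 = 0) (hgap : ∀ j, ε ≤ t (j + 1) - t j)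
    (U f : ℝ → ℝ) (hUnn : ∀ s, 0 ≤ s → 0 ≤ U s)
    (hflowc : ∀ j, ContinuousOn U (Set.Ico (t j) (t (j + 1))))
    (hderiv : ∀ j, ∀ s ∈ Set.Ioo (t j) (t (j + 1)), HasDerivAt U (f s) s)
    (hfineq : ∀ j, ∀ s ∈ Set.Ioo (t j) (t (j + 1)), f s ≤ -ϖ * U s + c)
    (hjump : ∀ j, ∃ Lm : ℝ,
      Filter.Tendsto U (nhdsWithin (t (j + 1)) (Set.Iio (t (j + 1)))) (nhds Lm) ∧
        U (t (j + 1)) ≤ Lm + d) :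
    ∀ s, 0 ≤ s →
      U s ≤ Real.exp (-ϖ * s) * U 0 +
        (c + ϖ * d) / (ϖ * (1 - Real.exp (-ε * ϖ))) := by
  classical
  set q : ℝ := Real.exp (-ε * ϖ) with hq
  have hq0 : 0 < q := Real.exp_pos _
  have hq1 : q < 1 := by
    rw [hq, Real.exp_lt_one_iff]; nlinarith
  have h1q : 0 < 1 - q := by linarith
  set A : ℝ := c / ϖ + d with hA
  have hcd : 0 ≤ c / ϖ := div_nonneg hc hϖ.le
  have hA0 : 0 ≤ A := by positivity
  have hmono : ∀ j, t j < t (j + 1) := fun j => by have := hgap j; linarith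
  have hlow : ∀ j : ℕ, (j : ℝ) * ε ≤ t j := by
    intro j
    induction j with
    | zero => simp [ht0]
    | succ k ih =>
      have := hgap k
      push_cast
      nlinarith
  have htnn : ∀ j, 0 ≤ t j := fun j => le_trans (by positivity) (hlow j)
  have hivl : ∀ j, ∀ s ∈ Set.Ico (t j) (t (j + 1)),
      U s ≤ Real.exp (-ϖ * (s - t j)) * U (t j)
        + (1 - Real.exp (-ϖ * (s - t j))) * (c / ϖ) :=
    fun j => gron_aux ϖ c hϖ _ _ U f (hflowc j) (hderiv j) (hfineq j)
  have hS : ∀ n : ℕ, (∑ m ∈ Finset.range n, q ^ m) ≤ 1 / (1 - q) := by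
    intro n
    rw [le_div_iff₀ h1q]
    have := geom_sum_mul q n
    have hqn : 0 ≤ q ^ n := pow_nonneg hq0.le n
    nlinarith
  have hSnn : ∀ n : ℕ, 0 ≤ ∑ m ∈ Finset.range n, q ^ m :=
    fun n => Finset.sum_nonneg fun m _ => pow_nonneg hq0.le m
  -- key induction: bound at jump times
  have key : ∀ j, U (t j) ≤ Real.exp (-ϖ * t j) * U 0
      + A * ∑ m ∈ Finset.range j, q ^ m := by
    intro j
    induction j with
    | zero => simp [ht0]
    | succ k ih =>
      obtain ⟨Lm, hLm, hUle⟩ := hjump k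
      have hne : (nhdsWithin (t (k + 1)) (Set.Iio (t (k + 1)))).NeBot :=
        nhdsLT_neBot _
      have hLmle : Lm ≤ Real.exp (-ϖ * (t (k + 1) - t k)) * U (t k) + c / ϖ := by
        have hRHS : Filter.Tendsto
            (fun s => Real.exp (-ϖ * (s - t k)) * U (t k)
              + (1 - Real.exp (-ϖ * (s - t k))) * (c / ϖ))
            (nhdsWithin (t (k + 1)) (Set.Iio (t (k + 1))))
            (nhds (Real.exp (-ϖ * (t (k + 1) - t k)) * U (t k)
              + (1 - Real.exp (-ϖ * (t (k + 1) - t k))) * (c / ϖ))) := by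
          apply Filter.Tendsto.mono_left _ nhdsWithin_le_nhds
          have hcont : Continuous fun s : ℝ => Real.exp (-ϖ * (s - t k)) := by fun_prop
          exact ((hcont.mul continuous_const).add
            ((continuous_const.sub hcont).mul continuous_const)).tendsto _
        have hle : Lm ≤ Real.exp (-ϖ * (t (k + 1) - t k)) * U (t k)
            + (1 - Real.exp (-ϖ * (t (k + 1) - t k))) * (c / ϖ) := by
          apply le_of_tendsto_of_tendsto hLm hRHS
          have hIoi : ∀ᶠ x in nhdsWithin (t (k + 1)) (Set.Iio (t (k + 1))),
              t k < x :=
            eventually_nhdsWithin_of_eventually_nhds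
              (eventually_gt_nhds (hmono k))
          filter_upwards [hIoi, self_mem_nhdsWithin] with x h1 h2
          exact hivl k x ⟨h1.le, h2⟩
        have hE : Real.exp (-ϖ * (t (k + 1) - t k)) ≤ 1 := by
          apply Real.exp_le_one_iff.2
          have := hgap k
          nlinarith
        nlinarith [Real.exp_pos (-ϖ * (t (k + 1) - t k))]
      have hΔ : Real.exp (-ϖ * (t (k + 1) - t k)) ≤ q := by
        rw [hq]
        apply Real.exp_le_exp.2
        have := hgap k
        nlinarith
      have hUtk : 0 ≤ U (t k) := hUnn _ (htnn k)
      have hexp : Real.exp (-ϖ * (t (k + 1) - t k)) * Real.exp (-ϖ * t k)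
          = Real.exp (-ϖ * t (k + 1)) := by
        rw [← Real.exp_add]; ring_nf
      have step2 : Real.exp (-ϖ * (t (k + 1) - t k)) * U (t k)
          ≤ Real.exp (-ϖ * (t (k + 1) - t k)) *
            (Real.exp (-ϖ * t k) * U 0 + A * ∑ m ∈ Finset.range k, q ^ m) :=
        mul_le_mul_of_nonneg_left ih (Real.exp_pos _).le
      have hE1 : Real.exp (-ϖ * (t (k + 1) - t k)) *
            (Real.exp (-ϖ * t k) * U 0 + A * ∑ m ∈ Finset.range k, q ^ m)
          ≤ Real.exp (-ϖ * t (k + 1)) * U 0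
            + q * (A * ∑ m ∈ Finset.range k, q ^ m) := by
        rw [mul_add, ← mul_assoc, hexp]
        have : Real.exp (-ϖ * (t (k + 1) - t k)) * (A * ∑ m ∈ Finset.range k, q ^ m)
            ≤ q * (A * ∑ m ∈ Finset.range k, q ^ m) :=
          mul_le_mul_of_nonneg_right hΔ (mul_nonneg hA0 (hSnn k))
        linarith
      have hgeo : A * ∑ m ∈ Finset.range (k + 1), q ^ m
          = q * (A * ∑ m ∈ Finset.range k, q ^ m) + A := by
        rw [geom_sum_succ]; ring
      rw [hgeo]
      have : U (t (k + 1)) ≤ Real.exp (-ϖ * (t (k + 1) - t k)) * U (t k) + A := by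
        rw [hA]; linarith
      linarith
  -- find the interval containing s
  intro s hs
  have hex : ∃ n, s < t (n + 1) := by
    obtain ⟨n, hn⟩ := exists_nat_gt (s / ε)
    refine ⟨n, lt_of_lt_of_le ?_ (hlow (n + 1))⟩
    rw [div_lt_iff₀ hε] at hn
    push_cast
    nlinarith
  set j := Nat.find hex with hj
  have hsj : s < t (j + 1) := Nat.find_spec hex
  have htjs : t j ≤ s := by
    rcases Nat.eq_zero_or_pos j with h0 | hpos
    · rw [h0, ht0]; exact hs
    · obtain ⟨k, hk⟩ := Nat.exists_eq_succ_of_ne_zero hpos.ne'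
      have := Nat.find_min hex (m := k) (by omega)
      push_neg at this
      rw [hk]
      exact this
  have hbound := hivl j s ⟨htjs, hsj⟩
  have hexp2 : Real.exp (-ϖ * (s - t j)) * Real.exp (-ϖ * t j) = Real.exp (-ϖ * s) := by
    rw [← Real.exp_add]; ring_nf
  have hUtj : 0 ≤ U (t j) := hUnn _ (htnn j)
  have hexp3 : Real.exp (-ϖ * (s - t j)) ≤ 1 := by
    apply Real.exp_le_one_iff.2; nlinarith
  have hexp4 : 0 < Real.exp (-ϖ * (s - t j)) := Real.exp_pos _
  -- rewrite target constant
  have hrw : (c + ϖ * d) / (ϖ * (1 - q)) = A / (1 - q) := by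
    rw [hA]; field_simp
  rw [hrw]
  -- convex combination bound
  have hSj : A * ∑ m ∈ Finset.range j, q ^ m ≤ A / (1 - q) := by
    have := hS j
    rw [div_eq_mul_one_div]
    exact mul_le_mul_of_nonneg_left this hA0
  have hcA : c / ϖ ≤ A / (1 - q) := by
    have h1 : A ≤ A / (1 - q) := by
      rw [le_div_iff₀ h1q]; nlinarith
    have : c / ϖ ≤ A := by rw [hA]; linarith
    linarith
  have h2 : Real.exp (-ϖ * (s - t j)) * U (t j)
      ≤ Real.exp (-ϖ * s) * U 0
        + Real.exp (-ϖ * (s - t j)) * (A * ∑ m ∈ Finset.range j, q ^ m) := by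
    calc Real.exp (-ϖ * (s - t j)) * U (t j)
        ≤ Real.exp (-ϖ * (s - t j)) *
          (Real.exp (-ϖ * t j) * U 0 + A * ∑ m ∈ Finset.range j, q ^ m) :=
          mul_le_mul_of_nonneg_left (key j) hexp4.le
      _ = Real.exp (-ϖ * s) * U 0
          + Real.exp (-ϖ * (s - t j)) * (A * ∑ m ∈ Finset.range j, q ^ m) := by
          rw [mul_add, ← mul_assoc, hexp2]
  have hconv : Real.exp (-ϖ * (s - t j)) * (A * ∑ m ∈ Finset.range j, q ^ m)
      + (1 - Real.exp (-ϖ * (s - t j))) * (c / ϖ) ≤ A / (1 - q) := by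
    nlinarith [hSj, hcA, hexp3, hexp4]
  calc U s ≤ Real.exp (-ϖ * (s - t j)) * U (t j)
        + (1 - Real.exp (-ϖ * (s - t j))) * (c / ϖ) := hbound
    _ ≤ (Real.exp (-ϖ * s) * U 0
          + Real.exp (-ϖ * (s - t j)) * (A * ∑ m ∈ Finset.range j, q ^ m))
        + (1 - Real.exp (-ϖ * (s - t j))) * (c / ϖ) := add_le_add_left h2 _
    _ ≤ Real.exp (-ϖ * s) * U 0 + A / (1 - q) := by
        rw [add_assoc]
        exact add_le_add_right hconv _
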